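/- Let (Ω, 𝓕, (𝓕_t)_{t∈[0,∞)}) be a T-space with truncation (T_t) and let τ be a stopping time. Then τ(ω) = τ(T_τ(ω)) for every ω ∈ Ω; in particular, τ is σ(T_τ)-measurable. -/

import Mathlib

open MeasureTheory Set NNReal ENNReal

/-- A T-space (truncated space): a filtered measurable space `(Ω, 𝓕, (𝓕ₜ)_{t ∈ [0,∞)})`
with `𝓕 = ⋁ₜ 𝓕ₜ`, equipped with a truncation family `(Tₜ)` such that `(t, ω) ↦ Tₜ ω` is
jointly measurable, `Tₜ ∘ Tₛ = T_{s ∧ t}` and `𝓕ₜ = σ(Tₜ)`. -/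
structure TSpace (Ω : Type*) [mΩ : MeasurableSpace Ω] where
  filt : ℝ≥0 → MeasurableSpace Ω
  T : ℝ≥0 → Ω → Ω
  iSup_filt : (⨆ t : ℝ≥0, filt t) = mΩ
  meas_T : Measurable fun p : ℝ≥0 × Ω => T p.1 p.2
  T_comp : ∀ (s t : ℝ≥0) (ω : Ω), T t (T s ω) = T (min s t) ω
  filt_eq : ∀ t : ℝ≥0, filt t = MeasurableSpace.comap (T t) mΩ

namespace TSpace

variable {Ω : Type*} [mΩ : MeasurableSpace Ω]

/-- Truncation indexed by extended times, with the convention `T_∞ = id`. -/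
noncomputable def Te (X : TSpace Ω) (t : ℝ≥0∞) (ω : Ω) : Ω :=
  if t = ∞ then ω else X.T t.toNNReal ω

/-- A (raw) stopping time on a T-space: `{τ ≤ t} ∈ 𝓕ₜ` for all `t ∈ [0,∞)`. -/
def IsStoppingTime (X : TSpace Ω) (τ : Ω → ℝ≥0∞) : Prop :=
  ∀ t : ℝ≥0, MeasurableSet[X.filt t] {ω | τ ω ≤ t}

/-- Truncation at a stopping time: `T_τ(ω) = T_{τ(ω)}(ω)`. -/
noncomputable def Tstop (X : TSpace Ω) (τ : Ω → ℝ≥0∞) (ω : Ω) : Ω :=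
  X.Te (τ ω) ω

end TSpace

theorem stmt2 {Ω : Type*} [mΩ : MeasurableSpace Ω] [StandardBorelSpace Ω]
    (X : TSpace Ω) (τ : Ω → ℝ≥0∞) (hτ : X.IsStoppingTime τ) :
    (∀ ω : Ω, τ ω = τ (X.Tstop τ ω)) ∧
      Measurable[MeasurableSpace.comap (X.Tstop τ) mΩ] τ := by
  have key : ∀ (s t : ℝ≥0), s ≤ t → ∀ ω : Ω, (τ (X.T t ω) ≤ s ↔ τ ω ≤ s) := by
    intro s t hst ω
    have h := hτ s
    rw [X.filt_eq] at h
    obtain ⟨B, hB, hBeq⟩ := h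
    have h1 : ∀ ω' : Ω, (τ ω' ≤ (s : ℝ≥0∞) ↔ X.T s ω' ∈ B) := by
      intro ω'
      constructor
      · intro h'; have : ω' ∈ X.T s ⁻¹' B := hBeq ▸ h'; exact this
      · intro h'; have : ω' ∈ X.T s ⁻¹' B := h'; rw [hBeq] at this; exact this
    have hcomp : X.T s (X.T t ω) = X.T s ω := by
      rw [X.T_comp t s ω, min_eq_right hst]
    rw [h1 (X.T t ω), hcomp, ← h1 ω]
  have hfix : ∀ ω : Ω, τ ω = τ (X.Tstop τ ω) := by
    intro ω
    by_cases htop : τ ω = ∞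
    · simp [TSpace.Tstop, TSpace.Te, htop]
    · set t := (τ ω).toNNReal with ht
      have htτ : τ ω = (t : ℝ≥0∞) := (ENNReal.coe_toNNReal htop).symm
      have hT : X.Tstop τ ω = X.T t ω := by
        simp [TSpace.Tstop, TSpace.Te, htop]; rfl
      rw [hT]
      have h1 : τ (X.T t ω) ≤ (t : ℝ≥0∞) := (key t t le_rfl ω).mpr htτ.le
      have h2 : (t : ℝ≥0∞) ≤ τ (X.T t ω) := by
        by_contra hc
        push_neg at hc
        have hfin : τ (X.T t ω) ≠ ∞ := (hc.trans_le le_top).ne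
        set s := (τ (X.T t ω)).toNNReal with hs
        have hsτ : τ (X.T t ω) = (s : ℝ≥0∞) := (ENNReal.coe_toNNReal hfin).symm
        have hst : s ≤ t := by
          have := hc.le
          rw [hsτ] at this
          exact_mod_cast this
        have : τ ω ≤ (s : ℝ≥0∞) := (key s t hst ω).mp hsτ.le
        rw [htτ] at this
        have : (t : ℝ≥0∞) < (t : ℝ≥0∞) := lt_of_le_of_lt this (by rw [← hsτ]; exact hc)
        exact this.false
      exact htτ.trans (le_antisymm h2 h1)
  refine ⟨hfix, ?_⟩
  have hτmeas : Measurable τ := by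
    apply measurable_of_Iic
    intro x
    cases x using ENNReal.recTopCoe with
    | top => simp
    | coe t =>
      have := hτ t
      rw [X.filt_eq] at this
      obtain ⟨B, hB, hBeq⟩ := this
      have hTt : Measurable (X.T t) := X.meas_T.comp (measurable_const.prodMk measurable_id)
      have : τ ⁻¹' Iic (t : ℝ≥0∞) = X.T t ⁻¹' B := by
        rw [hBeq]; rfl
      rw [this]
      exact hTt hB
  intro A hA
  refine ⟨τ ⁻¹' A, hτmeas hA, ?_⟩
  ext ω
  simp only [Set.mem_preimage]
  rw [← hfix ω]
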